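/- There is a universal constant c > 0 such that for every domain X, every concept class H of functions X → {0,1} whose VC dimension is finite and equal to d, and every integer k ≥ 1, the VC dimension of the class H^{∧k} of all conjunctions (pointwise AND) of at most k concepts from H is at most c · k · log₂(2k) · d. -/

import Mathlib

/-- A concept class `C` shatters a finite set `A` if every Boolean labeling of `A`
is realized by some concept in `C`. -/
def Shatters {X : Type*} (C : Set (X → Bool)) (A : Finset X) : Prop :=
  ∀ f : X → Bool, ∃ c ∈ C, ∀ x ∈ A, c x = f x

/-- The VC dimension of a concept class: the supremum of sizes of shattered finite sets. -/
noncomputable def vcDim {X : Type*} (C : Set (X → Bool)) : ℕ∞ :=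
  ⨆ A ∈ {A : Finset X | Shatters C A}, (A.card : ℕ∞)

/-- `H^{∧k}`: all pointwise conjunctions of at most `k` (and at least one) concepts from `H`. -/
def conjK {X : Type*} (H : Set (X → Bool)) (k : ℕ) : Set (X → Bool) :=
  {g | ∃ l : List (X → Bool), l ≠ [] ∧ l.length ≤ k ∧ (∀ h ∈ l, h ∈ H) ∧
    g = fun x => l.all fun h => h x}

open Finset Real


lemma core {X : Type} (H : Set (X → Bool)) (d k : ℕ) (hk : 1 ≤ k)
    (hd : ∀ s : Finset X, Shatters H s → s.card ≤ d)
    (A : Finset X) (hA : Shatters (conjK H k) A) :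
    2 ^ A.card ≤ (∑ i ∈ Finset.range (d+1), (A.card).choose i) ^ k := by
  classical
  set m := A.card with hm
  set tr : (X → Bool) → Finset X := fun h => A.filter (fun x => h x = true) with htr
  set 𝒜 : Finset (Finset X) := A.powerset.filter (fun B => ∃ h ∈ H, tr h = B) with h𝒜
  -- Step 1 : every set shattered by 𝒜 (Finset sense) is shattered by H (our sense)
  have step1 : ∀ s : Finset X, 𝒜.Shatters s → s.card ≤ d := by
    intro s hs
    have hsA : s ⊆ A := by
      obtain ⟨u, hu, hsu⟩ := hs (Finset.Subset.refl s)
      have : s ⊆ u := by rw [Finset.inter_eq_left] at hsu; exact hsu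
      exact this.trans (Finset.mem_powerset.1 (Finset.mem_filter.1 hu).1)
    refine hd s ?_
    intro f
    have ht : s.filter (fun x => f x = true) ⊆ s := Finset.filter_subset _ _
    obtain ⟨u, hu, hsu⟩ := hs ht
    obtain ⟨-, h, hH, hth⟩ := Finset.mem_filter.1 hu
    refine ⟨h, hH, fun x hx => ?_⟩
    have hxA : x ∈ A := hsA hx
    have h1 : h x = true ↔ x ∈ u := by
      rw [← hth, htr]; simp [hxA]
    have h2 : x ∈ u ↔ f x = true := by
      constructor
      · intro hxu
        have : x ∈ s ∩ u := Finset.mem_inter.2 ⟨hx, hxu⟩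
        rw [hsu] at this
        exact (Finset.mem_filter.1 this).2
      · intro hfx
        have : x ∈ s ∩ u := by rw [hsu]; exact Finset.mem_filter.2 ⟨hx, hfx⟩
        exact (Finset.mem_inter.1 this).2
    have := h1.trans h2
    cases hfx : f x <;> cases hhx : h x <;> simp_all
  -- Step 2 : 𝒜.card ≤ ∑ choose
  have step2 : 𝒜.card ≤ ∑ i ∈ Finset.range (d+1), m.choose i := by
    refine (Finset.card_le_card_shatterer 𝒜).trans ?_
    have hsub : 𝒜.shatterer ⊆ (Finset.range (d+1)).biUnion (fun i => A.powersetCard i) := by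
      intro s hs
      have hs' := Finset.mem_shatterer.1 hs
      have hsd : s.card ≤ d := step1 s hs'
      have hsA : s ⊆ A := by
        obtain ⟨u, hu, hsu⟩ := hs' (Finset.Subset.refl s)
        have : s ⊆ u := by rw [Finset.inter_eq_left] at hsu; exact hsu
        exact this.trans (Finset.mem_powerset.1 (Finset.mem_filter.1 hu).1)
      exact Finset.mem_biUnion.2 ⟨s.card, Finset.mem_range.2 (Nat.lt_succ_of_le hsd),
        Finset.mem_powersetCard.2 ⟨hsA, rfl⟩⟩
    refine (Finset.card_le_card hsub).trans ?_
    refine (Finset.card_biUnion_le).trans ?_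
    exact le_of_eq (Finset.sum_congr rfl fun i _ => Finset.card_powersetCard i A ▸ rfl)
  -- Step 3 : 2^m ≤ 𝒜.card ^ k
  have step3 : 2 ^ m ≤ 𝒜.card ^ k := by
    set ℬ : Finset (Finset X) := A.powerset.filter (fun B => ∃ g ∈ conjK H k, tr g = B) with hℬ
    have hpow : A.powerset ⊆ ℬ := by
      intro B hB
      have hBA : B ⊆ A := Finset.mem_powerset.1 hB
      obtain ⟨g, hg, hgf⟩ := hA (fun x => decide (x ∈ B))
      refine Finset.mem_filter.2 ⟨hB, g, hg, ?_⟩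
      ext x
      simp only [htr, Finset.mem_filter]
      constructor
      · rintro ⟨hxA, hgx⟩
        have := hgf x hxA
        rw [hgx] at this
        exact of_decide_eq_true this.symm
      · intro hxB
        have hxA : x ∈ A := hBA hxB
        refine ⟨hxA, ?_⟩
        rw [hgf x hxA]
        simp [hxB]
    have h2m : 2 ^ m ≤ ℬ.card := by
      calc 2 ^ m = A.powerset.card := (Finset.card_powerset A).symm
        _ ≤ ℬ.card := Finset.card_le_card hpow
    -- surjection from k-tuples of 𝒜 onto ℬ
    set Ψ : (Fin k → Finset X) → Finset X := fun v => A.filter (fun x => ∀ i : Fin k, x ∈ v i) with hΨ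
    have hsurj : Set.SurjOn Ψ (Fintype.piFinset (fun _ : Fin k => 𝒜) : Finset (Fin k → Finset X)) ℬ := by
      intro B hB
      obtain ⟨-, g, ⟨l, hlne, hllen, hlH, hlg⟩, hgB⟩ := Finset.mem_filter.1 hB
      set hd0 := l.head hlne with hhd0
      have hhdmem : hd0 ∈ l := List.head_mem hlne
      set v : Fin k → Finset X := fun i => tr (l.getD i.val hd0) with hv
      have hvmem : ∀ i : Fin k, l.getD i.val hd0 ∈ l := by
        intro i
        by_cases hi : i.val < l.length
        · rw [List.getD_eq_getElem l hd0 hi]; exact List.getElem_mem hi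
        · rw [List.getD_eq_default l hd0 (le_of_not_gt hi)]; exact hhdmem
      refine ⟨v, ?_, ?_⟩
      · rw [Finset.mem_coe, Fintype.mem_piFinset]
        intro i
        refine Finset.mem_filter.2 ⟨Finset.mem_powerset.2 (Finset.filter_subset _ _), _, hlH _ (hvmem i), rfl⟩
      · rw [← hgB]
        ext x
        simp only [hΨ, htr, Finset.mem_filter, hv]
        constructor
        · rintro ⟨hxA, hall⟩
          refine ⟨hxA, ?_⟩
          rw [hlg]
          simp only [List.all_eq_true]
          intro h hh
          obtain ⟨n, hn, rfl⟩ := List.getElem_of_mem hh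
          have hnk : n < k := lt_of_lt_of_le hn hllen
          have := hall ⟨n, hnk⟩
          rw [List.getD_eq_getElem l hd0 hn] at this
          exact this.2
        · rintro ⟨hxA, hgx⟩
          rw [hlg] at hgx
          simp only [List.all_eq_true] at hgx
          exact ⟨hxA, fun i => ⟨hxA, hgx _ (hvmem i)⟩⟩
    have := Finset.card_le_card_of_surjOn Ψ hsurj
    calc 2 ^ m ≤ ℬ.card := h2m
      _ ≤ (Fintype.piFinset (fun _ : Fin k => 𝒜)).card := this
      _ = 𝒜.card ^ k := by rw [Fintype.card_piFinset]; simp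
  exact step3.trans (Nat.pow_le_pow_left step2 k)


set_option maxHeartbeats 1000000 in
lemma analytic (d k m : ℕ) (hk : 1 ≤ k)
    (h : 2 ^ m ≤ (∑ i ∈ Finset.range (d+1), m.choose i) ^ k) :
    (m : ℝ) ≤ 4 * k * Real.logb 2 (2 * k) * d := by
  have hK1 : (1:ℝ) ≤ (k:ℝ) := by exact_mod_cast hk
  have hlogK : (0:ℝ) ≤ Real.log k := Real.log_nonneg hK1
  have hlog2pos : (0:ℝ) < Real.log 2 := Real.log_pos one_lt_two
  have hlog2lt1 : Real.log 2 < 1 := by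
    have := Real.log_two_lt_d9; linarith
  have hL1 : 1 + Real.log k ≤ Real.logb 2 (2 * k) := by
    have hL : Real.logb 2 (2 * k) = 1 + Real.log k / Real.log 2 := by
      rw [Real.logb, Real.log_mul (by norm_num) (by positivity)]
      field_simp
    rw [hL]
    have : Real.log k ≤ Real.log k / Real.log 2 := by
      rw [le_div_iff₀ hlog2pos]; nlinarith
    linarith
  have hLge1 : (1:ℝ) ≤ Real.logb 2 (2 * k) := by nlinarith [hL1, hlogK]
  by_cases hmd : m ≤ d * k
  · have hm : (m:ℝ) ≤ (d:ℝ) * k := by exact_mod_cast hmd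
    have hd0 : (0:ℝ) ≤ (d:ℝ) := Nat.cast_nonneg d
    nlinarith [hm, hLge1, hd0, hK1]
  push_neg at hmd
  have hd1 : 1 ≤ d := by
    by_contra hd0
    push_neg at hd0
    interval_cases d
    · simp only [Nat.zero_add, Finset.range_one, Finset.sum_singleton, Nat.choose_zero_right,
        one_pow] at h
      have := Nat.one_lt_two_pow_iff.2 (show m ≠ 0 by omega)
      omega
  have hdm : d ≤ m := le_trans (Nat.le_mul_of_pos_right d hk) hmd.le
  -- real versions
  set M := (m:ℝ) with hM
  set D := (d:ℝ) with hD
  set K := (k:ℝ) with hKdef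
  have hD1 : (1:ℝ) ≤ D := by show (1:ℝ) ≤ (d:ℝ); exact_mod_cast hd1
  have hM1 : (1:ℝ) ≤ M := by show (1:ℝ) ≤ (m:ℝ); exact_mod_cast (by omega : 1 ≤ m)
  have hDM : D ≤ M := by show (d:ℝ) ≤ (m:ℝ); exact_mod_cast hdm
  have hDKM : D * K < M := by show (d:ℝ) * (k:ℝ) < (m:ℝ); exact_mod_cast hmd
  have hMpos : (0:ℝ) < M := by linarith
  have hDpos : (0:ℝ) < D := by linarith
  have hKpos : (0:ℝ) < K := by linarith
  set S := ∑ i ∈ Finset.range (d+1), m.choose i with hSdef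
  have hS1 : 1 ≤ S := by
    have h0 : m.choose 0 ≤ S := Finset.single_le_sum (f := fun i => m.choose i)
      (fun i _ => Nat.zero_le _) (Finset.mem_range.2 (by omega))
    simpa using h0
  -- Step: (S:ℝ) ≤ exp D * (M/D)^d
  have hratio : (0:ℝ) < D / M := by positivity
  have hratio1 : D / M ≤ 1 := by rw [div_le_one hMpos]; exact hDM
  have hkey1 : (S:ℝ) * (D/M)^d ≤ (1 + D/M)^m := by
    have hbin : (1 + D/M)^m = ∑ i ∈ Finset.range (m+1), (D/M)^i * (m.choose i : ℝ) := by
      have := add_pow (D/M) 1 m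
      simp only [one_pow, mul_one] at this
      rw [add_comm 1 (D/M), this]
    rw [hbin]
    have h1 : (S:ℝ) * (D/M)^d = ∑ i ∈ Finset.range (d+1), (D/M)^d * (m.choose i : ℝ) := by
      rw [hSdef]
      push_cast
      rw [Finset.sum_mul]
      exact Finset.sum_congr rfl fun i _ => by ring
    rw [h1]
    refine le_trans (Finset.sum_le_sum fun i hi => ?_)
      (Finset.sum_le_sum_of_subset_of_nonneg ?_ fun i _ _ => by positivity)
    · have hid : i ≤ d := Nat.lt_succ_iff.1 (Finset.mem_range.1 hi)
      exact mul_le_mul_of_nonneg_right (pow_le_pow_of_le_one hratio.le hratio1 hid)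
        (Nat.cast_nonneg _)
    · exact Finset.range_subset_range.2 (by omega)
  have hkey2 : (1 + D/M)^m ≤ Real.exp D := by
    have h1 : (1 + D/M) ≤ Real.exp (D/M) := by
      have := Real.add_one_le_exp (D/M); linarith
    have h2 : (1 + D/M)^m ≤ Real.exp (D/M) ^ m := pow_le_pow_left₀ (by positivity) h1 m
    refine h2.trans ?_
    rw [← Real.exp_nat_mul]
    apply le_of_eq
    congr 1
    field_simp
    rfl
  have hS_le : (S:ℝ) ≤ Real.exp D * (M/D)^d := by
    have hMD : (0:ℝ) < (M/D)^d := by positivity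
    have hcancel : (D/M)^d * (M/D)^d = 1 := by
      rw [← mul_pow]
      field_simp
      exact one_pow d
    calc (S:ℝ) = (S:ℝ) * (D/M)^d * (M/D)^d := by
          rw [mul_assoc, hcancel, mul_one]
      _ ≤ (1 + D/M)^m * (M/D)^d := mul_le_mul_of_nonneg_right hkey1 hMD.le
      _ ≤ Real.exp D * (M/D)^d := mul_le_mul_of_nonneg_right hkey2 hMD.le
  -- cast main hypothesis and take logarithms
  have hmain : (2:ℝ)^m ≤ ((S:ℝ))^k := by exact_mod_cast h
  have hSpos : (0:ℝ) < (S:ℝ) := by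
    show (0:ℝ) < (S:ℕ)
    exact_mod_cast hS1
  have hlogstep : M * Real.log 2 ≤ K * (D + D * Real.log (M/D)) := by
    have h1 : (2:ℝ)^m ≤ (Real.exp D * (M/D)^d)^k :=
      hmain.trans (pow_le_pow_left₀ hSpos.le hS_le k)
    have h2 := Real.log_le_log (by positivity) h1
    rw [Real.log_pow, Real.log_pow, Real.log_mul (Real.exp_ne_zero D) (by positivity),
      Real.log_exp, Real.log_pow] at h2
    calc M * Real.log 2 = (m:ℕ) * Real.log 2 := by norm_num; rfl
      _ ≤ (k:ℕ) * (D + (d:ℕ) * Real.log (M/D)) := h2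
      _ = K * (D + D * Real.log (M/D)) := by rw [hKdef, hD]
  -- introduce s = M/(D*K)
  set s := M / (D * K) with hs
  have hs1 : 1 < s := by
    rw [hs, lt_div_iff₀ (by positivity)]
    linarith
  have hspos : (0:ℝ) < s := by linarith
  have hMsplit : M = D * K * s := by
    rw [hs]; field_simp
  have hlogMD : Real.log (M/D) = Real.log K + Real.log s := by
    have hMD : M / D = K * s := by rw [hs]; field_simp
    rw [hMD, Real.log_mul (ne_of_gt hKpos) (ne_of_gt hspos)]
  have hlogs : Real.log s ≤ s / Real.exp 1 := by
    have hse : (0:ℝ) < s / Real.exp 1 := by positivity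
    have h1 := Real.log_le_sub_one_of_pos hse
    rw [Real.log_div (ne_of_gt hspos) (Real.exp_ne_zero 1), Real.log_exp] at h1
    linarith
  have he : (2.7:ℝ) < Real.exp 1 := by
    have := Real.exp_one_gt_d9; linarith
  have hsdive : s / Real.exp 1 ≤ 0.38 * s := by
    rw [div_le_iff₀ (by positivity)]
    nlinarith
  have hlog2 : (0.69:ℝ) < Real.log 2 := by
    have := Real.log_two_gt_d9; linarith
  -- derive s * log 2 ≤ 1 + log K + s / e
  have hcore : s * Real.log 2 ≤ 1 + Real.log K + s / Real.exp 1 := by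
    have h1 : D * K * (s * Real.log 2) ≤ D * K * (1 + Real.log K + Real.log s) := by
      calc D * K * (s * Real.log 2) = M * Real.log 2 := by rw [hMsplit]; ring
        _ ≤ K * (D + D * Real.log (M/D)) := hlogstep
        _ = D * K * (1 + Real.log K + Real.log s) := by rw [hlogMD]; ring
    have h2 : s * Real.log 2 ≤ 1 + Real.log K + Real.log s := by
      have hDK : (0:ℝ) < D * K := by positivity
      exact le_of_mul_le_mul_left h1 hDK
    linarith
  have hs4 : s ≤ 4 * (1 + Real.log K) := by
    have hmul : s * 0.69 ≤ s * Real.log 2 :=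
      mul_le_mul_of_nonneg_left hlog2.le hspos.le
    linarith [hcore, hsdive, hmul, hlogK]
  -- conclude
  have hfinal : M ≤ 4 * D * K * (1 + Real.log K) := by
    rw [hMsplit]
    have h1 : D * K * s ≤ D * K * (4 * (1 + Real.log K)) :=
      mul_le_mul_of_nonneg_left hs4 (by positivity)
    exact h1.trans_eq (by ring)
  have h2 : 4 * D * K * (1 + Real.log K) ≤ 4 * D * K * Real.logb 2 (2 * K) :=
    mul_le_mul_of_nonneg_left hL1 (by positivity)
  calc M ≤ 4 * D * K * (1 + Real.log K) := hfinal
    _ ≤ 4 * D * K * Real.logb 2 (2 * K) := h2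
    _ = 4 * K * Real.logb 2 (2 * K) * D := by ring

/-- There is a universal constant `c > 0` such that for every domain `X`, every concept
class `H` with finite VC dimension `d`, and every `k ≥ 1`, the VC dimension of `H^{∧k}`
is at most `c · k · log₂(2k) · d`. -/
theorem stmt1 :
    ∃ c : ℝ, 0 < c ∧
      ∀ (X : Type) (H : Set (X → Bool)) (d k : ℕ), 1 ≤ k →
        vcDim H = (d : ℕ∞) →
        ∀ A : Finset X, Shatters (conjK H k) A →
          (A.card : ℝ) ≤ c * k * Real.logb 2 (2 * k) * d := by
  refine ⟨4, by norm_num, ?_⟩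
  intro X H d k hk hvc A hA
  have hd : ∀ s : Finset X, Shatters H s → s.card ≤ d := by
    intro s hs
    have h1 : (s.card : ℕ∞) ≤ vcDim H :=
      le_iSup₂ (f := fun (B : Finset X) (_ : B ∈ {B : Finset X | Shatters H B}) =>
        (B.card : ℕ∞)) s hs
    rw [hvc] at h1
    exact_mod_cast h1
  exact analytic d k A.card hk (core H d k hk hd A hA)
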